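/- If w is a solution with parameters (w₀,γ) and w′(x) ≥ 0 for all x ≥ 0, then w is strictly increasing on [0,∞) and w(x) → ∞ as x → ∞. -/

import Mathlib

open Set MeasureTheory Filter Topology

/-- `piU U c w = min_{μ ∈ U} (μ·w + c(μ))`, realized as an infimum. -/
noncomputable def piU (U : Set ℝ) (c : ℝ → ℝ) (w : ℝ) : ℝ :=
  sInf ((fun μ => μ * w + c μ) '' U)

/-- `w` is a continuously differentiable solution on `[0,∞)` of
`(σ²/2)·w′(x) + π(w(x)) + h(x) = γ` with `w(0) = w₀`, with derivative `w'`. -/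
def IsSolution (σ : ℝ) (U : Set ℝ) (c h : ℝ → ℝ) (w₀ γ : ℝ) (w w' : ℝ → ℝ) : Prop :=
  w 0 = w₀ ∧ ContinuousOn w' (Set.Ici 0) ∧
  (∀ x ∈ Set.Ici (0:ℝ), HasDerivWithinAt w (w' x) (Set.Ici 0) x) ∧
  (∀ x ∈ Set.Ici (0:ℝ), σ ^ 2 / 2 * w' x + piU U c (w x) + h x = γ)

theorem stmt_12 (σ : ℝ) (hσ : 0 < σ) (U : Set ℝ) (hUne : U.Nonempty) (hUcpt : IsCompact U)
    (c : ℝ → ℝ) (hc : Continuous c) (h : ℝ → ℝ)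
    (hhcont : ContinuousOn h (Set.Ici 0)) (hhmono : StrictMonoOn h (Set.Ici 0))
    (hh0 : h 0 = 0) (hhtop : Filter.Tendsto h Filter.atTop Filter.atTop)
    (w₀ γ : ℝ) (w w' : ℝ → ℝ) (hw : IsSolution σ U c h w₀ γ w w')
    (hpos : ∀ x : ℝ, 0 ≤ x → 0 ≤ w' x) :
    StrictMonoOn w (Set.Ici 0) ∧ Filter.Tendsto w Filter.atTop Filter.atTop := by
  obtain ⟨hw0, hw'cont, hderiv, heq⟩ := hw
  have hwc : ContinuousOn w (Set.Ici 0) := fun x hx => (hderiv x hx).continuousWithinAt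
  have hderivAt : ∀ x : ℝ, 0 < x → HasDerivAt w (w' x) x := by
    intro x hx
    exact (hderiv x hx.le).hasDerivAt (Ici_mem_nhds hx)
  have hmono : MonotoneOn w (Set.Ici 0) := by
    apply monotoneOn_of_deriv_nonneg (convex_Ici 0) hwc
    · intro x hx
      rw [interior_Ici] at hx
      exact (hderivAt x hx).differentiableAt.differentiableWithinAt
    · intro x hx
      rw [interior_Ici] at hx
      rw [(hderivAt x hx).deriv]
      exact hpos x hx.le
  -- strict monotonicity
  have hstrict : StrictMonoOn w (Set.Ici 0) := by
    intro a ha b hb hab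
    rcases lt_or_eq_of_le (hmono ha hb hab.le) with h' | h'
    · exact h'
    exfalso
    have hconst : ∀ x ∈ Set.Icc a b, w x = w a := by
      intro x hx
      have h1 : w a ≤ w x := hmono ha (le_trans ha hx.1) hx.1
      have h2 : w x ≤ w b := hmono (le_trans ha hx.1) hb hx.2
      linarith
    have hIoo : ∀ x ∈ Set.Ioo a b, piU U c (w a) + h x = γ := by
      intro x hx
      have hxpos : (0:ℝ) < x := lt_of_le_of_lt ha hx.1
      have hda : HasDerivAt w (w' x) x := hderivAt x hxpos
      have hev : (fun _ => w a) =ᶠ[𝓝 x] w := by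
        filter_upwards [Ioo_mem_nhds hx.1 hx.2] with y hy
        exact (hconst y (Set.Ioo_subset_Icc_self hy)).symm
      have hda0 : HasDerivAt w 0 x := by
        have h0 : HasDerivAt (fun _ => w a) (0:ℝ) x := hasDerivAt_const x (w a)
        exact h0.congr_of_eventuallyEq hev.symm
      have hw'x : w' x = 0 := hda.unique hda0
      have := heq x hxpos.le
      rw [hw'x, hconst x (Set.Ioo_subset_Icc_self hx)] at this
      linarith
    set x1 := a + (b - a) / 3 with hx1def
    set x2 := a + 2 * (b - a) / 3 with hx2def
    have hx1 : x1 ∈ Set.Ioo a b := by constructor <;> simp only [hx1def] <;> linarith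
    have hx2 : x2 ∈ Set.Ioo a b := by constructor <;> simp only [hx2def] <;> linarith
    have h12 : x1 < x2 := by simp only [hx1def, hx2def]; linarith
    have e1 := hIoo x1 hx1
    have e2 := hIoo x2 hx2
    have : h x1 = h x2 := by linarith
    exact absurd this (ne_of_lt (hhmono (le_trans ha hx1.1.le) (le_trans ha hx2.1.le) h12))
  refine ⟨hstrict, ?_⟩
  -- lower bound for piU
  obtain ⟨K, hK⟩ := hUcpt.isBounded.exists_norm_le
  obtain ⟨μ₀, hμ₀U, hmin⟩ := hUcpt.exists_isMinOn hUne hc.continuousOn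
  have hK0 : 0 ≤ K := le_trans (norm_nonneg μ₀) (hK μ₀ hμ₀U)
  have hpiU_lb : ∀ C v : ℝ, 0 ≤ C → |v| ≤ C → c μ₀ - K * C ≤ piU U c v := by
    intro C v hC hv
    apply le_csInf (hUne.image _)
    rintro y ⟨μ, hμ, rfl⟩
    dsimp only
    have h1 : |μ| ≤ K := by simpa using hK μ hμ
    have h2 : c μ₀ ≤ c μ := hmin hμ
    have h3 : -(K * C) ≤ μ * v := by
      have := abs_mul μ v
      have h4 : |μ * v| ≤ K * C := by
        rw [this]
        exact mul_le_mul h1 hv (abs_nonneg v) hK0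
      linarith [neg_abs_le (μ * v)]
    linarith
  -- show w is unbounded above on Ici 0
  have hunbdd : ¬ ∃ M : ℝ, ∀ x : ℝ, 0 ≤ x → w x ≤ M := by
    rintro ⟨M, hM⟩
    set C : ℝ := max |w 0| |M| with hCdef
    have hC0 : 0 ≤ C := le_trans (abs_nonneg _) (le_max_left _ _)
    have habs : ∀ x : ℝ, 0 ≤ x → |w x| ≤ C := by
      intro x hx
      rw [abs_le]
      constructor
      · have h1 : w 0 ≤ w x := hmono (Set.mem_Ici.mpr (le_refl 0)) hx hx
        have h2 : -|w 0| ≤ w 0 := neg_abs_le _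
        have h3 : |w 0| ≤ C := le_max_left _ _
        linarith
      · have h1 : w x ≤ M := hM x hx
        have h2 : M ≤ |M| := le_abs_self _
        have h3 : |M| ≤ C := le_max_right _ _
        linarith
    set L : ℝ := c μ₀ - K * C with hLdef
    obtain ⟨x₀, hx₀⟩ := (tendsto_atTop_atTop.mp hhtop) (γ - L + 1)
    set x : ℝ := max x₀ 0 with hxdef
    have hx0 : (0:ℝ) ≤ x := le_max_right _ _
    have hhx : γ - L + 1 ≤ h x := hx₀ x (le_max_left _ _)
    have hpi : L ≤ piU U c (w x) := hpiU_lb C (w x) hC0 (habs x hx0)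
    have heqx := heq x hx0
    have hw'x : 0 ≤ w' x := hpos x hx0
    have hσ2 : 0 < σ ^ 2 / 2 := by positivity
    nlinarith
  rw [tendsto_atTop_atTop]
  intro b
  by_contra hcon
  push_neg at hcon
  apply hunbdd
  refine ⟨b, fun x hx => ?_⟩
  obtain ⟨a, ha, hwa⟩ := hcon (max x 0)
  have hax : x ≤ a := le_trans (le_max_left _ _) ha
  have ha0 : (0:ℝ) ≤ a := le_trans (le_max_right _ _) ha
  exact le_of_lt (lt_of_le_of_lt (hmono hx ha0 hax) hwa)
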